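/- In the setting of Merkulov's construction above, if Q(λ_3(a_1,a_2,a_3)) = 0 and Q(a_1·a_2)·Q(a_3·a_4) = 0 for all a_1, a_2, a_3, a_4 ∈ A, then λ_n = 0 for all n ≥ 4 (hence m_n = Π∘λ_n = 0 for all n ≥ 4). -/
import Mathlib


/-- `Qλ`, with the convention `Qλ₁ = -id` (Merkulov). -/
def QlamAux {A : Type} [Ring A] (Q : A → A) (lam : ∀ N : ℕ, (Fin N → A) → A) :
    ∀ N : ℕ, (Fin N → A) → A :=
  fun N v => if h : N = 1 then -(v ⟨0, by omega⟩) else Q (lam N v)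

/-- Merkulov's construction; second vanishing criterion.  In the
setting of Merkulov's construction — a dg-algebra `(A, d)` with grading `𝒜`, projection
`Π` onto a subspace `B`, homotopy `Q` with `1 - Π = dQ + Qd`, and maps `λ_n` defined by
`λ₂(a₁,a₂) = a₁·a₂` and the recursion
`λ_n = -Σ_{k+l=n} (-1)^{k+(l-1)(|a₁|+⋯+|a_k|)} Q(λ_k)·Q(λ_l)` (with `Qλ₁ = -id`) —
if `Q(λ₃(a₁,a₂,a₃)) = 0` and `Q(a₁·a₂)·Q(a₃·a₄) = 0` for all `aᵢ ∈ A`, then `λ_n = 0`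
for all `n ≥ 4` (hence `m_n = Π ∘ λ_n = 0` for all `n ≥ 4`). -/
theorem stmt14 {k A : Type} [Field k] [Ring A] [Algebra k A]
    (𝒜 : ℤ → Submodule k A)
    (d Q Pi : A →ₗ[k] A) (Bsub : Submodule k A)
    (hd2 : ∀ x, d (d x) = 0)
    (hgradedMul : ∀ i j x y, x ∈ 𝒜 i → y ∈ 𝒜 j → x * y ∈ 𝒜 (i + j))
    (hddeg : ∀ (i : ℤ) (x), x ∈ 𝒜 i → d x ∈ 𝒜 (i + 1))
    (hQdeg : ∀ (i : ℤ) (x), x ∈ 𝒜 i → Q x ∈ 𝒜 (i - 1))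
    (hPiB : ∀ x, Pi x ∈ Bsub)
    (hPiproj : ∀ x ∈ Bsub, Pi x = x)
    (hPid : ∀ x, Pi (d x) = d (Pi x))
    (hhtpy : ∀ x : A, x - Pi x = d (Q x) + Q (d x))
    (lam : ∀ N : ℕ, (Fin N → A) → A)
    (hlam2 : ∀ v : Fin 2 → A, lam 2 v = v 0 * v 1)
    (hlamrec : ∀ N, 3 ≤ N → ∀ (a : Fin N → A) (da : Fin N → ℤ),
      (∀ i, a i ∈ 𝒜 (da i)) →
      lam N a = - ∑ j ∈ Finset.Ioo 0 N,
        ((-1 : k) ^ ((j : ℤ) + ((N : ℤ) - (j : ℤ) - 1) *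
            ∑ i ∈ Finset.range j, (if h : i < N then da ⟨i, h⟩ else 0)))
          • (QlamAux (⇑Q) lam j (fun t => if h : (t : ℕ) < N then a ⟨t, h⟩ else 0) *
             QlamAux (⇑Q) lam (N - j) (fun t => if h : j + (t : ℕ) < N then a ⟨j + t, h⟩ else 0)))
    (hQlam3 : ∀ (a : Fin 3 → A) (da : Fin 3 → ℤ), (∀ i, a i ∈ 𝒜 (da i)) → Q (lam 3 a) = 0)
    (hQQ : ∀ a1 a2 a3 a4 : A, Q (a1 * a2) * Q (a3 * a4) = 0) :
    ∀ N, 4 ≤ N → ∀ (a : Fin N → A) (da : Fin N → ℤ),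
      (∀ i, a i ∈ 𝒜 (da i)) → lam N a = 0 ∧ Pi (lam N a) = 0 := by
  intro N
  induction N using Nat.strong_induction_on with
  | _ N IH =>
    intro hN a da ha
    have key : ∀ m : ℕ, 3 ≤ m → m < N →
        ∀ (v : Fin m → A) (dv : Fin m → ℤ), (∀ i, v i ∈ 𝒜 (dv i)) →
        QlamAux (⇑Q) lam m v = 0 := by
      intro m hm hmN v dv hv
      unfold QlamAux
      rw [dif_neg (by omega)]
      by_cases h3 : m = 3
      · subst h3; exact hQlam3 v dv hv
      · rw [(IH m hmN (by omega) v dv hv).1, map_zero]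
    have hz : lam N a = 0 := by
      rw [hlamrec N (by omega) a da ha, neg_eq_zero]
      apply Finset.sum_eq_zero
      intro j hj
      rw [Finset.mem_Ioo] at hj
      have hv1 : ∀ t : Fin j,
          (if h : (t : ℕ) < N then a ⟨t, h⟩ else 0) ∈
            𝒜 (da ⟨(t : ℕ), by have := t.2; omega⟩) := by
        intro t
        rw [dif_pos (show (t : ℕ) < N by have := t.2; omega)]
        exact ha _
      have hv2 : ∀ t : Fin (N - j),
          (if h : j + (t : ℕ) < N then a ⟨j + t, h⟩ else 0) ∈
            𝒜 (da ⟨j + (t : ℕ), by have := t.2; omega⟩) := by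
        intro t
        rw [dif_pos (show j + (t : ℕ) < N by have := t.2; omega)]
        exact ha _
      rcases Nat.lt_or_ge j 3 with hj3 | hj3
      · -- j = 1 or j = 2
        rcases Nat.lt_or_ge (N - j) 3 with hNj3 | hNj3
        · -- then j = 2 and N = 4, N - j = 2
          have hj2 : j = 2 := by omega
          have hN4 : N = 4 := by omega
          subst hj2
          have hNj2 : N - 2 = 2 := by omega
          have h0 : QlamAux (⇑Q) lam 2
                (fun t : Fin 2 => if h : (t : ℕ) < N then a ⟨t, h⟩ else 0) *
              QlamAux (⇑Q) lam (N - 2)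
                (fun t : Fin (N - 2) => if h : 2 + (t : ℕ) < N then a ⟨2 + t, h⟩ else 0) = 0 := by
            rw [hNj2]
            unfold QlamAux
            rw [dif_neg (by omega), dif_neg (by omega), hlam2, hlam2]
            exact hQQ _ _ _ _
          rw [h0, smul_zero]
        · have h0 : QlamAux (⇑Q) lam (N - j)
              (fun t => if h : j + (t : ℕ) < N then a ⟨j + t, h⟩ else 0) = 0 :=
            key (N - j) hNj3 (by omega) _ _ hv2
          rw [h0, mul_zero, smul_zero]
      · have h0 : QlamAux (⇑Q) lam j
            (fun t => if h : (t : ℕ) < N then a ⟨t, h⟩ else 0) = 0 :=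
          key j hj3 hj.2 _ _ hv1
        rw [h0, zero_mul, smul_zero]
    exact ⟨hz, by rw [hz, map_zero]⟩
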